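/- Modulo the span of all degree-$d$ monomials other than $x_0^d, x_0^{d-1}x_1, \ldots, x_0x_1^{d-1}$, and modulo $x_0 x_1^{d-1}$: for $f \in W$ (forms whose only $x_0,x_1$-monomial is $x_1^d$) and $2 \leq i \leq n$, one has $x_0 \cdot \partial f/\partial x_i \equiv \sum_{m=1}^{d-1} c_{u(i,m)} x_0^{m+1} x_1^{d-m-1}$ and $x_1 \cdot \partial f/\partial x_i \equiv \sum_{m=2}^{d-1} c_{u(i,m)} x_0^{m} x_1^{d-m}$, where $c_{u(i,m)}$ is the coefficient in $f$ of $x_0^m x_1^{d-m-1} x_i$. -/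

import Mathlib

open MvPolynomial

private lemma coeff_pderiv' {σ : Type*} [DecidableEq σ] {R : Type*} [CommSemiring R]
    (i : σ) (f : MvPolynomial σ R) (u : σ →₀ ℕ) :
    coeff u (pderiv i f) = ((u i + 1 : ℕ) : R) * coeff (u + Finsupp.single i 1) f := by
  induction f using MvPolynomial.induction_on' with
  | monomial s a =>
      rw [pderiv_monomial, coeff_monomial, coeff_monomial]
      by_cases h2 : s = u + Finsupp.single i 1
      · have hsi : s i = u i + 1 := by
          rw [h2]; simp [Finsupp.add_apply, Finsupp.single_apply]
        have h1 : s - Finsupp.single i 1 = u := by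
          rw [h2, add_tsub_cancel_right]
        rw [if_pos h1, if_pos h2, hsi]
        push_cast
        ring
      · rw [if_neg h2, mul_zero]
        by_cases h1 : s - Finsupp.single i 1 = u
        · rw [if_pos h1]
          by_cases hs : s i = 0
          · simp [hs]
          · exfalso
            apply h2
            rw [← h1, tsub_add_cancel_of_le]
            exact Finsupp.single_le_iff.2 (by omega)
        · rw [if_neg h1]
  | add p q hp hq =>
      simp [hp, hq, mul_add]

private lemma degree_fin {N : ℕ} (u : Fin N →₀ ℕ) : u.degree = ∑ j, u j :=
  Finset.sum_subset (Finset.subset_univ _)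
    (fun _ _ hx => Finsupp.notMem_support_iff.mp hx)

private lemma sum_single_fin {N : ℕ} (a : Fin N) (b : ℕ) :
    (∑ j, Finsupp.single a b j) = b := by
  simp [Finsupp.single_apply]

private lemma pair_eq_iff {N : ℕ} {p0 p1 : Fin N} (h01 : p0 ≠ p1) (a b a' b' : ℕ) :
    Finsupp.single p0 a + Finsupp.single p1 b
      = Finsupp.single p0 a' + Finsupp.single p1 b' ↔ a = a' ∧ b = b' := by
  constructor
  · intro h
    constructor
    · have := DFunLike.congr_fun h p0
      simpa [Finsupp.add_apply, Finsupp.single_apply, h01.symm] using this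
    · have := DFunLike.congr_fun h p1
      simpa [Finsupp.add_apply, Finsupp.single_apply, h01] using this
  · rintro ⟨rfl, rfl⟩; rfl

private lemma mem_span_of (K : Type*) [Field K] (n d : ℕ) (hn : 2 ≤ n) (hd : 2 ≤ d)
    (p : MvPolynomial (Fin (n + 1)) K)
    (h : ∀ u : Fin (n + 1) →₀ ℕ, coeff u p ≠ 0 → (∑ j, u j) = d ∧
      (u = Finsupp.single (⟨0, Nat.succ_pos n⟩ : Fin (n + 1)) 1
            + Finsupp.single ⟨1, Nat.succ_lt_succ (Nat.lt_of_lt_of_le Nat.zero_lt_two hn)⟩ (d - 1) ∨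
       ∀ m, m ≤ d - 1 → u ≠ Finsupp.single (⟨0, Nat.succ_pos n⟩ : Fin (n + 1)) (d - m)
            + Finsupp.single ⟨1, Nat.succ_lt_succ (Nat.lt_of_lt_of_le Nat.zero_lt_two hn)⟩ m)) :
    p ∈ Submodule.span K
      ({ q | ∃ u : Fin (n + 1) →₀ ℕ, (∑ j, u j) = d ∧
          (∀ m, m ≤ d - 1 →
            u ≠ Finsupp.single (⟨0, Nat.succ_pos n⟩ : Fin (n + 1)) (d - m)
              + Finsupp.single ⟨1, Nat.succ_lt_succ (Nat.lt_of_lt_of_le Nat.zero_lt_two hn)⟩ m) ∧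
          q = monomial u (1 : K) } ∪
        { monomial (Finsupp.single (⟨0, Nat.succ_pos n⟩ : Fin (n + 1)) 1
            + Finsupp.single ⟨1, Nat.succ_lt_succ (Nat.lt_of_lt_of_le Nat.zero_lt_two hn)⟩ (d - 1)) (1 : K) }) := by
  rw [← support_sum_monomial_coeff p]
  refine Submodule.sum_mem _ fun u hu => ?_
  have hu' := MvPolynomial.mem_support_iff.mp hu
  have hmono : monomial u (coeff u p) = coeff u p • monomial u (1 : K) := by
    rw [smul_monomial, smul_eq_mul, mul_one]
  rw [hmono]
  refine Submodule.smul_mem _ _ (Submodule.subset_span ?_)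
  rcases (h u hu').2 with heq | hne
  · right; rw [heq]; rfl
  · left; exact ⟨u, (h u hu').1, hne, rfl⟩

/-- modulo the span of all degree-`d` monomials other than
`x₀ᵈ, x₀^(d-1)x₁, …, x₀x₁^(d-1)`, together with `x₀x₁^(d-1)`, for `f ∈ W`
(only `x₀,x₁`-monomial allowed is `x₁ᵈ`) and `2 ≤ i ≤ n` one has
`x₀·∂f/∂xᵢ ≡ ∑_{m=1}^{d-1} c_{u(i,m)} x₀^(m+1) x₁^(d-m-1)` and
`x₁·∂f/∂xᵢ ≡ ∑_{m=2}^{d-1} c_{u(i,m)} x₀^m x₁^(d-m)`, where `c_{u(i,m)}` is the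
coefficient in `f` of `x₀^m x₁^(d-m-1) xᵢ`. -/
theorem stmt12 (K : Type*) [Field K] [IsAlgClosed K] [CharZero K]
    (n d : ℕ) (hn : 2 ≤ n) (hd : 2 ≤ d)
    (f : MvPolynomial (Fin (n + 1)) K) (hf : f.IsHomogeneous d)
    (hfW : ∀ m, m ≤ d - 1 → f.coeff
      (Finsupp.single ⟨0, by omega⟩ (d - m) + Finsupp.single ⟨1, by omega⟩ m) = 0)
    (i : Fin (n + 1)) (hi : 2 ≤ i.val)
    (c : ℕ → K)
    (hc : ∀ m, c m = f.coeff (Finsupp.single ⟨0, by omega⟩ m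
      + Finsupp.single ⟨1, by omega⟩ (d - m - 1) + Finsupp.single i 1))
    (Modu : Submodule K (MvPolynomial (Fin (n + 1)) K))
    (hModu : Modu = Submodule.span K
      ({ p | ∃ u : Fin (n + 1) →₀ ℕ, (∑ j, u j) = d ∧
          (∀ m, m ≤ d - 1 →
            u ≠ Finsupp.single ⟨0, by omega⟩ (d - m) + Finsupp.single ⟨1, by omega⟩ m) ∧
          p = monomial u (1 : K) } ∪
        { monomial (Finsupp.single ⟨0, by omega⟩ 1 + Finsupp.single ⟨1, by omega⟩ (d - 1)) (1 : K) })) :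
    X ⟨0, by omega⟩ * pderiv i f
        - ∑ m ∈ Finset.Icc 1 (d - 1), (c m) •
            monomial (Finsupp.single (⟨0, by omega⟩ : Fin (n + 1)) (m + 1)
              + Finsupp.single ⟨1, by omega⟩ (d - m - 1)) (1 : K) ∈ Modu ∧
    X ⟨1, by omega⟩ * pderiv i f
        - ∑ m ∈ Finset.Icc 2 (d - 1), (c m) •
            monomial (Finsupp.single (⟨0, by omega⟩ : Fin (n + 1)) m
              + Finsupp.single ⟨1, by omega⟩ (d - m)) (1 : K) ∈ Modu := by
  classical
  set E0 : Fin (n + 1) := ⟨0, by omega⟩ with hE0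
  set E1 : Fin (n + 1) := ⟨1, by omega⟩ with hE1
  have h01 : E0 ≠ E1 := by simp [hE0, hE1, Fin.ext_iff]
  have hi0 : E0 ≠ i := by simp [hE0, Fin.ext_iff]; omega
  have hi1 : E1 ≠ i := by simp [hE1, Fin.ext_iff]; omega
  have hhom : ∀ (j0 : Fin (n + 1)) (u : Fin (n + 1) →₀ ℕ),
      coeff u (X j0 * pderiv i f) ≠ 0 → (∑ j, u j) = d := by
    intro j0 u hA
    rw [coeff_X_mul'] at hA
    split_ifs at hA with hj
    · set w := u - Finsupp.single j0 1 with hw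
      have hle : Finsupp.single j0 1 ≤ u :=
        Finsupp.single_le_iff.2 (Nat.one_le_iff_ne_zero.2 (Finsupp.mem_support_iff.mp hj))
      have hu2 : w + Finsupp.single j0 1 = u := tsub_add_cancel_of_le hle
      rw [coeff_pderiv'] at hA
      have hcf : coeff (w + Finsupp.single i 1) f ≠ 0 := fun h => hA (by rw [h, mul_zero])
      have hdeg : (w + Finsupp.single i 1).degree = d := by
        by_contra hne; exact hcf (hf.coeff_eq_zero hne)
      rw [degree_fin] at hdeg
      rw [← hu2]
      simp only [Finsupp.add_apply, Finset.sum_add_distrib, sum_single_fin] at hdeg ⊢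
      omega
    · exact absurd rfl hA
  -- Part 1 key cancellation
  have key1 : ∀ m, m ≤ d - 2 →
      coeff (Finsupp.single E0 (d - m) + Finsupp.single E1 m) (X E0 * pderiv i f) =
      coeff (Finsupp.single E0 (d - m) + Finsupp.single E1 m)
        (∑ m' ∈ Finset.Icc 1 (d - 1), (c m') •
          monomial (Finsupp.single E0 (m' + 1) + Finsupp.single E1 (d - m' - 1)) (1 : K)) := by
    intro m hm
    have hwi : (Finsupp.single E0 (d - m - 1) + Finsupp.single E1 m) i = 0 := by
      simp [Finsupp.add_apply, Finsupp.single_apply, hi0, hi1]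
    have hA : coeff (Finsupp.single E0 (d - m) + Finsupp.single E1 m) (X E0 * pderiv i f)
        = coeff (Finsupp.single E0 (d - m - 1) + Finsupp.single E1 m + Finsupp.single i 1) f := by
      have hsplit : Finsupp.single E0 (d - m) + Finsupp.single E1 m
          = Finsupp.single E0 1 + (Finsupp.single E0 (d - m - 1) + Finsupp.single E1 m) := by
        have h1 : 1 + (d - m - 1) = d - m := by omega
        rw [← add_assoc, ← Finsupp.single_add, h1]
      rw [hsplit, coeff_X_mul, coeff_pderiv', hwi]
      norm_num
    have hB : coeff (Finsupp.single E0 (d - m) + Finsupp.single E1 m)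
        (∑ m' ∈ Finset.Icc 1 (d - 1), (c m') •
          monomial (Finsupp.single E0 (m' + 1) + Finsupp.single E1 (d - m' - 1)) (1 : K))
        = c (d - m - 1) := by
      rw [coeff_sum]
      rw [Finset.sum_eq_single_of_mem (d - m - 1) (by rw [Finset.mem_Icc]; omega)]
      · rw [coeff_smul, coeff_monomial, if_pos ((pair_eq_iff h01 _ _ _ _).2 ⟨by omega, by omega⟩),
          smul_eq_mul, mul_one]
      · intro b _ hb
        rw [coeff_smul, coeff_monomial, if_neg, smul_zero]
        intro heq
        obtain ⟨h1, h2⟩ := (pair_eq_iff h01 _ _ _ _).1 heq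
        omega
    rw [hA, hB, hc]
    have h2 : d - (d - m - 1) - 1 = m := by omega
    rw [h2]
  -- Part 2 key cancellation
  have key2 : ∀ m, m ≤ d - 2 →
      coeff (Finsupp.single E0 (d - m) + Finsupp.single E1 m) (X E1 * pderiv i f) =
      coeff (Finsupp.single E0 (d - m) + Finsupp.single E1 m)
        (∑ m' ∈ Finset.Icc 2 (d - 1), (c m') •
          monomial (Finsupp.single E0 m' + Finsupp.single E1 (d - m')) (1 : K)) := by
    intro m hm
    rcases Nat.eq_zero_or_pos m with hm0 | hm1
    · subst hm0
      have hA : coeff (Finsupp.single E0 (d - 0) + Finsupp.single E1 0) (X E1 * pderiv i f)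
          = 0 := by
        rw [coeff_X_mul', if_neg]
        simp [Finsupp.mem_support_iff, Finsupp.add_apply, Finsupp.single_apply, h01]
      rw [hA, coeff_sum]
      symm
      apply Finset.sum_eq_zero
      intro b hb
      rw [Finset.mem_Icc] at hb
      rw [coeff_smul, coeff_monomial, if_neg, smul_zero]
      intro heq
      obtain ⟨h1, h2⟩ := (pair_eq_iff h01 _ _ _ _).1 heq
      omega
    · have hwi : (Finsupp.single E0 (d - m) + Finsupp.single E1 (m - 1)) i = 0 := by
        simp [Finsupp.add_apply, Finsupp.single_apply, hi0, hi1]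
      have hA : coeff (Finsupp.single E0 (d - m) + Finsupp.single E1 m) (X E1 * pderiv i f)
          = coeff (Finsupp.single E0 (d - m) + Finsupp.single E1 (m - 1) + Finsupp.single i 1)
              f := by
        have hsplit : Finsupp.single E0 (d - m) + Finsupp.single E1 m
            = Finsupp.single E1 1 + (Finsupp.single E0 (d - m) + Finsupp.single E1 (m - 1)) := by
          have h1 : 1 + (m - 1) = m := by omega
          rw [add_left_comm, ← Finsupp.single_add, h1]
        rw [hsplit, coeff_X_mul, coeff_pderiv', hwi]
        norm_num
      have hB : coeff (Finsupp.single E0 (d - m) + Finsupp.single E1 m)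
          (∑ m' ∈ Finset.Icc 2 (d - 1), (c m') •
            monomial (Finsupp.single E0 m' + Finsupp.single E1 (d - m')) (1 : K))
          = c (d - m) := by
        rw [coeff_sum]
        rw [Finset.sum_eq_single_of_mem (d - m) (by rw [Finset.mem_Icc]; omega)]
        · rw [coeff_smul, coeff_monomial, if_pos ((pair_eq_iff h01 _ _ _ _).2 ⟨rfl, by omega⟩),
            smul_eq_mul, mul_one]
        · intro b _ hb
          rw [coeff_smul, coeff_monomial, if_neg, smul_zero]
          intro heq
          obtain ⟨h1, h2⟩ := (pair_eq_iff h01 _ _ _ _).1 heq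
          omega
      rw [hA, hB, hc]
      have h2 : d - (d - m) - 1 = m - 1 := by omega
      rw [h2]
  -- sums of target monomials have degree d
  have hsumv : ∀ (a b : ℕ), a + b = d →
      (∑ j, (Finsupp.single E0 a + Finsupp.single E1 b) j) = d := by
    intro a b hab
    simp only [Finsupp.add_apply, Finset.sum_add_distrib, sum_single_fin]
    omega
  constructor
  · rw [hModu]
    apply mem_span_of K n d hn hd
    intro u hu
    by_cases hS : ∃ m, m ≤ d - 2 ∧ u = Finsupp.single E0 (d - m) + Finsupp.single E1 m
    · obtain ⟨m, hm, rfl⟩ := hS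
      exact absurd (by rw [coeff_sub, key1 m hm, sub_self]) hu
    · push_neg at hS
      have hsum : (∑ j, u j) = d := by
        rw [coeff_sub] at hu
        by_cases hA : coeff u (X E0 * pderiv i f) = 0
        · have hB : coeff u (∑ m' ∈ Finset.Icc 1 (d - 1), (c m') •
              monomial (Finsupp.single E0 (m' + 1) + Finsupp.single E1 (d - m' - 1)) (1 : K))
              ≠ 0 := by
            intro h; rw [hA, h, sub_self] at hu; exact hu rfl
          rw [coeff_sum] at hB
          obtain ⟨m', hm', hne⟩ := Finset.exists_ne_zero_of_sum_ne_zero hB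
          rw [Finset.mem_Icc] at hm'
          rw [coeff_smul, coeff_monomial] at hne
          split_ifs at hne with hcond
          · rw [← hcond]
            exact hsumv _ _ (by omega)
          · simp at hne
        · exact hhom E0 u hA
      refine ⟨hsum, ?_⟩
      by_cases hsp : u = Finsupp.single E0 1 + Finsupp.single E1 (d - 1)
      · left; exact hsp
      · right
        intro m hm hne2
        rcases Nat.lt_or_ge m (d - 1) with h | h
        · exact hS m (by omega) hne2
        · have hmd : m = d - 1 := by omega
          subst hmd
          apply hsp
          have : d - (d - 1) = 1 := by omega
          rw [this] at hne2
          exact hne2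
  · rw [hModu]
    apply mem_span_of K n d hn hd
    intro u hu
    by_cases hS : ∃ m, m ≤ d - 2 ∧ u = Finsupp.single E0 (d - m) + Finsupp.single E1 m
    · obtain ⟨m, hm, rfl⟩ := hS
      exact absurd (by rw [coeff_sub, key2 m hm, sub_self]) hu
    · push_neg at hS
      have hsum : (∑ j, u j) = d := by
        rw [coeff_sub] at hu
        by_cases hA : coeff u (X E1 * pderiv i f) = 0
        · have hB : coeff u (∑ m' ∈ Finset.Icc 2 (d - 1), (c m') •
              monomial (Finsupp.single E0 m' + Finsupp.single E1 (d - m')) (1 : K))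
              ≠ 0 := by
            intro h; rw [hA, h, sub_self] at hu; exact hu rfl
          rw [coeff_sum] at hB
          obtain ⟨m', hm', hne⟩ := Finset.exists_ne_zero_of_sum_ne_zero hB
          rw [Finset.mem_Icc] at hm'
          rw [coeff_smul, coeff_monomial] at hne
          split_ifs at hne with hcond
          · rw [← hcond]
            exact hsumv _ _ (by omega)
          · simp at hne
        · exact hhom E1 u hA
      refine ⟨hsum, ?_⟩
      by_cases hsp : u = Finsupp.single E0 1 + Finsupp.single E1 (d - 1)
      · left; exact hsp
      · right
        intro m hm hne2
        rcases Nat.lt_or_ge m (d - 1) with h | h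
        · exact hS m (by omega) hne2
        · have hmd : m = d - 1 := by omega
          subst hmd
          apply hsp
          have : d - (d - 1) = 1 := by omega
          rw [this] at hne2
          exact hne2
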